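/- Let f ∈ k[x,y,z] be homogeneous of degree d, char k = 0, δ = det(Hessian f), and Hamiltonians H_yz, H_zx as usual. Then (d-1)·(H_zx(Δ_xx) − H_yz(Δ_xy)) = x·∂_z δ, where Δ_xx = f_yy f_zz − f_yz² and Δ_xy = f_xz f_yz − f_xy f_zz. -/

import Mathlib

open MvPolynomial

noncomputable def dX {k : Type*} [CommSemiring k] (f : MvPolynomial (Fin 3) k) :
    MvPolynomial (Fin 3) k := pderiv 0 f
noncomputable def dY {k : Type*} [CommSemiring k] (f : MvPolynomial (Fin 3) k) :
    MvPolynomial (Fin 3) k := pderiv 1 f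
noncomputable def dZ {k : Type*} [CommSemiring k] (f : MvPolynomial (Fin 3) k) :
    MvPolynomial (Fin 3) k := pderiv 2 f

section aux

variable {k : Type*} [CommRing k]

lemma pderiv_comm' (i j : Fin 3) (f : MvPolynomial (Fin 3) k) :
    pderiv i (pderiv j f) = pderiv j (pderiv i f) := by
  induction f using MvPolynomial.induction_on with
  | C a => simp
  | add p q hp hq => simp [hp, hq]
  | mul_X p n hp =>
    have hXij : ∀ a b : Fin 3, pderiv a (pderiv b (X n : MvPolynomial (Fin 3) k)) = 0 := by
      intro a b
      by_cases h : b = n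
      · subst h; simp
      · rw [pderiv_X_of_ne (Ne.symm h)]; simp
    simp only [pderiv_mul, map_add, pderiv_mul, hp, hXij, mul_zero, add_zero]
    ring

lemma X_mul_pderiv_monomial (i : Fin 3) (s : Fin 3 →₀ ℕ) (a : k) :
    X i * pderiv i (monomial s a) = (s i) • monomial s a := by
  rw [pderiv_monomial]
  by_cases h : s i = 0
  · simp [h]
  · have hX : (X i : MvPolynomial (Fin 3) k) = monomial (Finsupp.single i 1) 1 := by
      rw [← X_pow_eq_monomial, pow_one]
    rw [hX, monomial_mul, one_mul]
    have hs : Finsupp.single i 1 + (s - Finsupp.single i 1) = s := by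
      ext a
      simp only [Finsupp.add_apply, Finsupp.tsub_apply, Finsupp.single_apply]
      by_cases hai : i = a
      · subst hai; simp; omega
      · simp [hai]
    rw [hs, smul_monomial]
    congr 1
    simp [nsmul_eq_mul, mul_comm]

lemma euler_aux {n : ℕ} {f : MvPolynomial (Fin 3) k} (hf : f.IsHomogeneous n) :
    X 0 * pderiv 0 f + X 1 * pderiv 1 f + X 2 * pderiv 2 f = C (n : k) * f := by
  conv_lhs => rw [f.as_sum]
  conv_rhs => rw [f.as_sum]
  rw [map_sum (pderiv 0), map_sum (pderiv 1), map_sum (pderiv 2)]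
  rw [Finset.mul_sum, Finset.mul_sum, Finset.mul_sum, Finset.mul_sum,
    ← Finset.sum_add_distrib, ← Finset.sum_add_distrib]
  refine Finset.sum_congr rfl fun s hs => ?_
  rw [_root_.X_mul_pderiv_monomial, _root_.X_mul_pderiv_monomial, _root_.X_mul_pderiv_monomial]
  have hdeg : s 0 + s 1 + s 2 = n := by
    have h := hf (mem_support_iff.mp hs)
    simpa [Finsupp.weight_apply, Finsupp.sum_fintype, Fin.sum_univ_three] using h
  rw [← add_smul, ← add_smul, hdeg]
  rw [← Nat.cast_smul_eq_nsmul k, smul_eq_C_mul]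

lemma euler_shift {g : MvPolynomial (Fin 3) k} {c : k}
    (hg : X 0 * pderiv 0 g + X 1 * pderiv 1 g + X 2 * pderiv 2 g = C c * g) (j : Fin 3) :
    X 0 * pderiv 0 (pderiv j g) + X 1 * pderiv 1 (pderiv j g) + X 2 * pderiv 2 (pderiv j g)
      = C (c - 1) * pderiv j g := by
  have h := congrArg (pderiv j) hg
  simp only [map_add, pderiv_mul, pderiv_C_mul, pderiv_C, zero_mul, zero_add] at h
  rw [pderiv_comm' j 0 g, pderiv_comm' j 1 g, pderiv_comm' j 2 g] at h
  have hsum : pderiv j (X 0 : MvPolynomial (Fin 3) k) * pderiv 0 g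
      + pderiv j (X 1 : MvPolynomial (Fin 3) k) * pderiv 1 g
      + pderiv j (X 2 : MvPolynomial (Fin 3) k) * pderiv 2 g = pderiv j g := by
    fin_cases j <;>
      simp [pderiv_X_self, pderiv_X_of_ne, show (0:Fin 3) ≠ 1 by decide,
        show (0:Fin 3) ≠ 2 by decide, show (1:Fin 3) ≠ 0 by decide,
        show (1:Fin 3) ≠ 2 by decide, show (2:Fin 3) ≠ 0 by decide,
        show (2:Fin 3) ≠ 1 by decide]
  rw [map_sub, map_one]
  linear_combination h - hsum

end aux

theorem stmt16 {k : Type*} [Field k] [CharZero k] (d : ℕ)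
    (f : MvPolynomial (Fin 3) k) (hf : f.IsHomogeneous d) :
    C ((d : k) - 1) *
        ((dX f * dZ (dY (dY f) * dZ (dZ f) - dZ (dY f) ^ 2)
            - dZ f * dX (dY (dY f) * dZ (dZ f) - dZ (dY f) ^ 2))
          - (dZ f * dY (dZ (dX f) * dZ (dY f) - dY (dX f) * dZ (dZ f))
            - dY f * dZ (dZ (dX f) * dZ (dY f) - dY (dX f) * dZ (dZ f))))
      = X 0 * pderiv 2
          (Matrix.det (Matrix.of fun i j : Fin 3 => pderiv i (pderiv j f))) := by
  have ef := euler_aux hf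
  have e0 := euler_shift ef 0
  have e1 := euler_shift ef 1
  have e2 := euler_shift ef 2
  have s02 := euler_shift e2 0
  have s12 := euler_shift e2 1
  have s22 := euler_shift e2 2
  simp only [dX, dY, dZ]
  rw [Matrix.det_fin_three]
  simp only [Matrix.of_apply]
  simp only [map_sub, map_add, map_one, pderiv_mul, pderiv_pow]
  simp only [map_sub, map_one] at e0 e1 e2 s02 s12 s22
  simp only [pderiv_comm' 1 0, pderiv_comm' 2 0, pderiv_comm' 2 1] at *
  set g0 := pderiv (0 : Fin 3) f
  set g1 := pderiv (1 : Fin 3) f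
  set g2 := pderiv (2 : Fin 3) f
  set h00 := pderiv (0 : Fin 3) (pderiv (0 : Fin 3) f)
  set h01 := pderiv (0 : Fin 3) (pderiv (1 : Fin 3) f)
  set h02 := pderiv (0 : Fin 3) (pderiv (2 : Fin 3) f)
  set h11 := pderiv (1 : Fin 3) (pderiv (1 : Fin 3) f)
  set h12 := pderiv (1 : Fin 3) (pderiv (2 : Fin 3) f)
  set h22 := pderiv (2 : Fin 3) (pderiv (2 : Fin 3) f)
  set t002 := pderiv (0 : Fin 3) (pderiv (0 : Fin 3) (pderiv (2 : Fin 3) f))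
  set t012 := pderiv (0 : Fin 3) (pderiv (1 : Fin 3) (pderiv (2 : Fin 3) f))
  set t022 := pderiv (0 : Fin 3) (pderiv (2 : Fin 3) (pderiv (2 : Fin 3) f))
  set t112 := pderiv (1 : Fin 3) (pderiv (1 : Fin 3) (pderiv (2 : Fin 3) f))
  set t122 := pderiv (1 : Fin 3) (pderiv (2 : Fin 3) (pderiv (2 : Fin 3) f))
  set t222 := pderiv (2 : Fin 3) (pderiv (2 : Fin 3) (pderiv (2 : Fin 3) f))
  linear_combination
    (-(t112 * h22 + h11 * t222 - 2 * h12 * t122)) * e0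
    + (-(t022 * h12 + h02 * t122 - t012 * h22 - h01 * t222)) * e1
    + (-(-h11 * t022 + h12 * t012 - h02 * t112 + h01 * t122)) * e2
    + (h12 ^ 2 - h11 * h22) * s02
    + (h01 * h22 - h02 * h12) * s12
    + (h02 * h11 - h01 * h12) * s22
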